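/- For every integer n ≥ 1 the following identity holds in the field ℚ(q): ∑_{j=1}^{n} ( (−1)ʲ·(q−q⁻¹)^{j−1} / j! ) · ∑_{(k₁,…,k_j)} ∏_{i=1}^{j} [2k_i]/k_i = (1−q⁴) / ( q^{2n}·(q−q⁻¹) ), where the inner sum runs over all j-tuples (k₁,…,k_j) of positive integers with k₁+⋯+k_j = n. -/

import Mathlib

noncomputable section

/-- `K = ℚ(q)`, the field of rational functions over `ℚ` in the indeterminate `q`. -/
abbrev K : Type := RatFunc ℚ

/-- The indeterminate `q`. -/
def q : K := RatFunc.X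

/-- The quantum integer `[n] = (qⁿ - q⁻ⁿ)/(q - q⁻¹)`. -/
def qint (n : ℤ) : K := (q ^ n - q ^ (-n)) / (q - q⁻¹)

open Finset PowerSeries

instance : CharZero K :=
  charZero_of_injective_algebraMap (IsFractionRing.injective (Polynomial ℚ) (RatFunc ℚ))

lemma q_ne_zero : q ≠ 0 := RatFunc.X_ne_zero

lemma q_pow_ne_one {m : ℕ} (hm : 0 < m) : q ^ m ≠ 1 := by
  intro h
  have hinj : Function.Injective (algebraMap (Polynomial ℚ) K) :=
    IsFractionRing.injective _ _
  have hX : (Polynomial.X : Polynomial ℚ) ^ m = 1 := by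
    apply hinj
    rw [map_pow, map_one, RatFunc.algebraMap_X]
    exact h
  have := congrArg Polynomial.natDegree hX
  simp [Polynomial.natDegree_X_pow] at this
  omega

lemma c_ne_zero : q - q⁻¹ ≠ 0 := by
  intro h
  rw [sub_eq_zero] at h
  have : q ^ 2 = 1 := by
    rw [pow_two]; nth_rewrite 2 [h]
    exact mul_inv_cancel₀ q_ne_zero
  exact q_pow_ne_one (by norm_num) this

lemma coeff_pow_tuple {R : Type*} [CommRing R] (φ : PowerSeries R) (j n : ℕ) :
    PowerSeries.coeff n (φ ^ j) =
      ∑ k ∈ Finset.Nat.antidiagonalTuple j n, ∏ i, PowerSeries.coeff (k i) φ := by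
  induction j generalizing n with
  | zero =>
    cases n with
    | zero => simp
    | succ m => simp [Finset.Nat.antidiagonalTuple_zero_succ]
  | succ j ih =>
    rw [pow_succ', PowerSeries.coeff_mul]
    simp_rw [ih, Finset.mul_sum]
    rw [Finset.sum_sigma']
    refine Finset.sum_nbij' (fun x => Fin.cons x.1.1 x.2)
      (fun k => ⟨(k 0, n - k 0), Fin.tail k⟩) ?_ ?_ ?_ ?_ ?_
    · rintro ⟨⟨a, b⟩, k⟩ hx
      simp only [Finset.mem_sigma, Finset.HasAntidiagonal.mem_antidiagonal,
        Finset.Nat.mem_antidiagonalTuple] at hx ⊢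
      rw [Fin.sum_cons, hx.2, hx.1]
    · intro k hk
      simp only [Finset.Nat.mem_antidiagonalTuple] at hk
      have h0 : k 0 ≤ n := by
        rw [← hk]; exact Finset.single_le_sum (fun i _ => Nat.zero_le _) (Finset.mem_univ 0)
      simp only [Finset.mem_sigma, Finset.HasAntidiagonal.mem_antidiagonal,
        Finset.Nat.mem_antidiagonalTuple]
      constructor
      · omega
      · have := Fin.sum_univ_succ k
        rw [← hk]
        simp only [Fin.tail]
        omega
    · rintro ⟨⟨a, b⟩, k⟩ hx
      simp only [Finset.mem_sigma, Finset.HasAntidiagonal.mem_antidiagonal,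
        Finset.Nat.mem_antidiagonalTuple] at hx
      ext
      · simp only [Fin.cons_zero]
      · simp only [Fin.cons_zero]; omega
      · simp [Fin.tail_cons]
    · intro k hk
      simp [Fin.cons_self_tail]
    · rintro ⟨⟨a, b⟩, k⟩ hx
      simp only [Finset.mem_sigma, Finset.HasAntidiagonal.mem_antidiagonal,
        Finset.Nat.mem_antidiagonalTuple] at hx
      rw [Fin.prod_univ_succ]
      simp [Fin.tail_cons]

/-- the series `F = ∑_{k≥1} [2k]/k Xᵏ` -/
def F : PowerSeries K := PowerSeries.mk fun k => qint (2 * k) / k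

lemma coeff_F (k : ℕ) : PowerSeries.coeff k F = qint (2 * k) / k := coeff_mk _ _

lemma coeff_F_zero : PowerSeries.coeff 0 F = 0 := by
  simp [coeff_F, qint]

lemma cf (k : ℕ) (hk : 1 ≤ k) :
    (q⁻¹ - q) * ((k : K) * PowerSeries.coeff k F) = (q ^ (2 * k))⁻¹ - q ^ (2 * k) := by
  have hkK : (k : K) ≠ 0 := Nat.cast_ne_zero.mpr (by omega)
  rw [coeff_F, mul_comm ((k : K)) _, div_mul_cancel₀ _ hkK, qint]
  have h1 : (q : K) ^ (2 * (k : ℤ)) = q ^ (2 * k) := by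
    rw [show (2 * (k : ℤ)) = ((2 * k : ℕ) : ℤ) by push_cast; ring, zpow_natCast]
  have h2 : (q : K) ^ (-(2 * (k : ℤ))) = (q ^ (2 * k))⁻¹ := by
    rw [zpow_neg, h1]
  rw [h1, h2, show (q⁻¹ - q) = -(q - q⁻¹) by ring, neg_mul,
    mul_div_cancel₀ _ c_ne_zero]
  ring

lemma coeff_pow_eq_zero {j m : ℕ} (h : m < j) : PowerSeries.coeff m (F ^ j) = 0 := by
  rw [coeff_pow_tuple]
  apply Finset.sum_eq_zero
  intro k hk
  rw [Finset.Nat.mem_antidiagonalTuple] at hk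
  have : ∃ i, k i = 0 := by
    by_contra hc
    push_neg at hc
    have : (j : ℕ) ≤ ∑ i, k i := by
      calc (j : ℕ) = ∑ _i : Fin j, 1 := by simp
      _ ≤ ∑ i, k i := Finset.sum_le_sum fun i _ => by have := hc i; omega
    omega
  obtain ⟨i, hi⟩ := this
  apply Finset.prod_eq_zero (Finset.mem_univ i)
  rw [hi, coeff_F_zero]

lemma nP (j n : ℕ) (hn : 1 ≤ n) :
    (n : K) * PowerSeries.coeff n (F ^ (j + 1)) =
      ((j : K) + 1) * ∑ i ∈ range n,
        ((i : K) + 1) * PowerSeries.coeff (i + 1) F * PowerSeries.coeff (n - 1 - i) (F ^ j) := by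
  have h1 : PowerSeries.coeff (n - 1) (PowerSeries.derivative K (F ^ (j + 1)))
      = PowerSeries.coeff n (F ^ (j + 1)) * n := by
    rw [PowerSeries.coeff_derivative]
    have : ((n - 1 : ℕ) : K) + 1 = (n : K) := by norm_cast; omega
    rw [this, Nat.sub_add_cancel hn]
  have h2 : (PowerSeries.derivative K) (F ^ (j + 1))
      = (j + 1) • (F ^ j * PowerSeries.derivative K F) := by
    rw [Derivation.leibniz_pow]
    simp [smul_smul, smul_eq_mul]
  rw [h2, map_nsmul, PowerSeries.coeff_mul,
    Finset.Nat.sum_antidiagonal_eq_sum_range_succ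
      (fun a b => PowerSeries.coeff a (F ^ j) *
        PowerSeries.coeff b (PowerSeries.derivative K F)),
    show (n - 1).succ = n by omega, ← Finset.sum_range_reflect] at h1
  rw [mul_comm, ← h1, nsmul_eq_mul]
  push_cast
  congr 1
  apply Finset.sum_congr rfl
  intro i hi
  rw [Finset.mem_range] at hi
  rw [show n - 1 - (n - 1 - i) = i by omega, PowerSeries.coeff_derivative]
  ring

/-- coefficients of `exp((q⁻¹-q)·F)` -/
def e (n : ℕ) : K :=
  ∑ j ∈ range (n + 1), (q⁻¹ - q) ^ j / (j.factorial : K) * PowerSeries.coeff n (F ^ j)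

lemma e_zero : e 0 = 1 := by simp [e]

lemma e_eq_sum (m N : ℕ) (h : m < N) :
    ∑ j ∈ range N, (q⁻¹ - q) ^ j / (j.factorial : K) * PowerSeries.coeff m (F ^ j) = e m := by
  refine (Finset.sum_subset (Finset.range_subset_range.2 (by omega)) fun j hj hj' => ?_).symm
  rw [Finset.mem_range] at hj'
  rw [coeff_pow_eq_zero (by omega), mul_zero]

lemma e_rec (n : ℕ) (hn : 1 ≤ n) :
    (n : K) * e n = ∑ i ∈ range n, ((q ^ (2 * (i + 1)))⁻¹ - q ^ (2 * (i + 1))) * e (n - 1 - i) := by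
  conv_lhs => rw [e]
  rw [Finset.mul_sum, Finset.sum_range_succ']
  have h0 : (n : K) * ((q⁻¹ - q) ^ 0 / ((Nat.factorial 0 : ℕ) : K) * PowerSeries.coeff n (F ^ 0)) = 0 := by
    rw [pow_zero F, PowerSeries.coeff_one]
    simp [show n ≠ 0 by omega]
  rw [h0, add_zero]
  have step : ∀ j ∈ range n,
      (n : K) * ((q⁻¹ - q) ^ (j + 1) / ((Nat.factorial (j + 1) : ℕ) : K) * PowerSeries.coeff n (F ^ (j + 1)))
      = ∑ i ∈ range n, ((q ^ (2 * (i + 1)))⁻¹ - q ^ (2 * (i + 1))) *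
          ((q⁻¹ - q) ^ j / ((Nat.factorial j : ℕ) : K) * PowerSeries.coeff (n - 1 - i) (F ^ j)) := by
    intro j _
    rw [mul_left_comm, nP j n hn, ← mul_assoc, Finset.mul_sum]
    apply Finset.sum_congr rfl
    intro i _
    have hfac : ((Nat.factorial (j + 1) : ℕ) : K) = ((j : K) + 1) * ((Nat.factorial j : ℕ) : K) := by
      rw [Nat.factorial_succ]; push_cast; ring
    have hj1 : ((j : K) + 1) ≠ 0 := by
      have : ((j + 1 : ℕ) : K) ≠ 0 := Nat.cast_ne_zero.mpr (by omega)
      push_cast at this; exact this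
    have hfj : ((Nat.factorial j : ℕ) : K) ≠ 0 := Nat.cast_ne_zero.mpr (Nat.factorial_ne_zero j)
    have hcf := cf (i + 1) (by omega)
    push_cast at hcf
    rw [← hcf, hfac]
    field_simp
    ring
  rw [Finset.sum_congr rfl step, Finset.sum_comm]
  apply Finset.sum_congr rfl
  intro i hi
  rw [Finset.mem_range] at hi
  rw [← Finset.mul_sum, e_eq_sum (n - 1 - i) n (by omega)]

/-- the closed form -/
def t (n : ℕ) : K := if n = 0 then 1 else (1 - q ^ 4) / q ^ (2 * n)

lemma t_rec (n : ℕ) (hn : 1 ≤ n) :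
    (n : K) * t n = ∑ i ∈ range n, ((q ^ (2 * (i + 1)))⁻¹ - q ^ (2 * (i + 1))) * t (n - 1 - i) := by
  obtain ⟨m, rfl⟩ : ∃ m, n = m + 1 := ⟨n - 1, by omega⟩
  rw [Finset.sum_range_succ]
  have hQ : (q : K) ^ (2 * (m + 1)) ≠ 0 := pow_ne_zero _ q_ne_zero
  have hlast : t (m + 1 - 1 - m) = 1 := by simp [t]
  rw [hlast, mul_one]
  have hterm : ∀ i ∈ range m,
      ((q ^ (2 * (i + 1)))⁻¹ - q ^ (2 * (i + 1))) * t (m + 1 - 1 - i)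
      = (1 - q ^ 4) * (q ^ (2 * (m + 1)))⁻¹
        - (1 - q ^ 4) * ((q ^ 4) ^ i * q ^ 4) * (q ^ (2 * (m + 1)))⁻¹ := by
    intro i hi
    rw [Finset.mem_range] at hi
    have ht : t (m + 1 - 1 - i) = (1 - q ^ 4) / q ^ (2 * (m - i)) := by
      rw [show m + 1 - 1 - i = m - i by omega, t, if_neg (by omega)]
    rw [ht]
    have hab : q ^ (2 * (m - i)) * q ^ (2 * (i + 1)) = q ^ (2 * (m + 1)) := by
      rw [← pow_add]; congr 1; omega
    have ha2 : (q ^ 4 : K) ^ i * q ^ 4 = (q ^ (2 * (i + 1))) ^ 2 := by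
      rw [← pow_mul, ← pow_add, ← pow_mul]; congr 1; ring
    have ha : (q : K) ^ (2 * (i + 1)) ≠ 0 := pow_ne_zero _ q_ne_zero
    have hb : (q : K) ^ (2 * (m - i)) ≠ 0 := pow_ne_zero _ q_ne_zero
    rw [ha2, ← hab]
    field_simp
  rw [Finset.sum_congr rfl hterm]
  rw [Finset.sum_sub_distrib, Finset.sum_const, Finset.card_range]
  have hgeom : (1 - q ^ 4) * ∑ i ∈ range m, ((q : K) ^ 4) ^ i = 1 - (q ^ 4) ^ m := by
    have := geom_sum_mul ((q : K) ^ 4) m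
    linear_combination -this
  have hQ2 : ((q : K) ^ 4) ^ m * q ^ 4 = (q ^ (2 * (m + 1))) ^ 2 := by
    rw [← pow_mul, ← pow_add, ← pow_mul]; congr 1; ring
  have hsum2 : ∑ i ∈ range m, (1 - q ^ 4) * (((q : K) ^ 4) ^ i * q ^ 4) * (q ^ (2 * (m + 1)))⁻¹
      = (1 - (q ^ 4) ^ m) * q ^ 4 * (q ^ (2 * (m + 1)))⁻¹ := by
    rw [← hgeom]
    simp only [Finset.mul_sum, Finset.sum_mul]
    exact Finset.sum_congr rfl fun i _ => by ring
  rw [hsum2, t, if_neg (by omega)]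
  have hcast : ((m + 1 : ℕ) : K) = (m : K) + 1 := by push_cast; ring
  rw [hcast]
  simp only [nsmul_eq_mul]
  field_simp
  linear_combination ((m : K) + 1 - q ^ 4 * ((m:K) + 1)) * hQ2

lemma e_eq_t (n : ℕ) : e n = t n := by
  induction n using Nat.strong_induction_on with
  | _ n ih =>
    cases n with
    | zero => rw [e_zero]; simp [t]
    | succ m =>
      have hn : 1 ≤ m + 1 := by omega
      have h1 := e_rec (m + 1) hn
      have h2 := t_rec (m + 1) hn
      rw [Finset.sum_congr rfl (fun i hi => by rw [ih (m + 1 - 1 - i) (by omega)])] at h1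
      have hne : ((m + 1 : ℕ) : K) ≠ 0 := Nat.cast_ne_zero.mpr (by omega)
      exact mul_left_cancel₀ hne (h1.trans h2.symm)

lemma key (j n : ℕ) :
    ∑ k ∈ (Finset.Nat.antidiagonalTuple j n).filter (fun k => ∀ i, k i ≠ 0),
        ∏ i, qint (2 * (k i : ℤ)) / ((k i : K))
      = PowerSeries.coeff n (F ^ j) := by
  rw [coeff_pow_tuple]
  rw [Finset.sum_filter_of_ne]
  · exact Finset.sum_congr rfl fun k _ => Finset.prod_congr rfl fun i _ => by
      rw [coeff_F]
  · intro x hx hfx i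
    by_contra h0
    apply hfx
    apply Finset.prod_eq_zero (Finset.mem_univ i)
    rw [h0]
    simp

/-- For every `n ≥ 1`:
`∑_{j=1}^{n} ((−1)ʲ (q−q⁻¹)^{j−1}/j!) ∑_{k₁+⋯+k_j = n, kᵢ ≥ 1} ∏ᵢ [2kᵢ]/kᵢ
  = (1−q⁴)/(q^{2n}(q−q⁻¹))`. -/
theorem stmt3 (n : ℕ) (hn : 1 ≤ n) :
    ∑ j ∈ Finset.Icc 1 n,
        ((-1 : K) ^ j * (q - q⁻¹) ^ (j - 1) / (j.factorial : K)) *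
          ∑ k ∈ (Finset.Nat.antidiagonalTuple j n).filter (fun k => ∀ i, k i ≠ 0),
            ∏ i, qint (2 * (k i : ℤ)) / ((k i : K)) =
      (1 - q ^ 4) / (q ^ (2 * n) * (q - q⁻¹)) := by
  have hL : ∑ j ∈ Finset.Icc 1 n,
        ((-1 : K) ^ j * (q - q⁻¹) ^ (j - 1) / (j.factorial : K)) *
          ∑ k ∈ (Finset.Nat.antidiagonalTuple j n).filter (fun k => ∀ i, k i ≠ 0),
            ∏ i, qint (2 * (k i : ℤ)) / ((k i : K))
      = ∑ j ∈ Finset.Icc 1 n,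
          ((q⁻¹ - q) ^ j / (j.factorial : K) * PowerSeries.coeff n (F ^ j)) * (q - q⁻¹)⁻¹ := by
    apply Finset.sum_congr rfl
    intro j hj
    rw [Finset.mem_Icc] at hj
    rw [key j n]
    have hcj : (q⁻¹ - q) ^ j = (-1 : K) ^ j * ((q - q⁻¹) ^ (j - 1) * (q - q⁻¹)) := by
      rw [← pow_succ, Nat.sub_add_cancel hj.1, show q⁻¹ - q = -(q - q⁻¹) by ring, neg_pow]
    have hfj : ((j.factorial : ℕ) : K) ≠ 0 := Nat.cast_ne_zero.mpr (Nat.factorial_ne_zero j)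
    rw [hcj]
    linear_combination (-(-1 : K) ^ j * ((q - q⁻¹) ^ (j - 1)) / (j.factorial : K) *
      PowerSeries.coeff n (F ^ j)) * mul_inv_cancel₀ c_ne_zero
  rw [hL, ← Finset.sum_mul]
  have hsplit : Finset.range (n + 1) = insert 0 (Finset.Icc 1 n) := by
    ext x; simp only [Finset.mem_range, Finset.mem_insert, Finset.mem_Icc]; omega
  have he : e n = ∑ j ∈ Finset.Icc 1 n,
      (q⁻¹ - q) ^ j / (j.factorial : K) * PowerSeries.coeff n (F ^ j) := by
    rw [e, hsplit, Finset.sum_insert (by simp)]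
    rw [pow_zero F, PowerSeries.coeff_one]
    simp [show n ≠ 0 by omega]
  rw [← he, e_eq_t, t, if_neg (by omega), ← div_eq_mul_inv, div_div]
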